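/- arXiv:1505.05064 — 3 statements merged into one kernel-verified Lean document; each statement's English description precedes it below -/
import Mathlib

section
/- Let H be a subgroup of GL_m(ℤ). Suppose there exists a positive definite Hermitian matrix P ∈ ℂ^{m×m} such that every element h ∈ H, regarded as a complex matrix, satisfies h^* · P · h = P (where h^* denotes the conjugate transpose). Then H is finite. -/
open Matrix
open scoped ComplexOrder


lemma entry_bound (m : ℕ) (P : Matrix (Fin m) (Fin m) ℂ) (hP : P.PosDef) :
    ∃ C : ℝ, ∀ h : Matrix (Fin m) (Fin m) ℂ, hᴴ * P * h = P →
      ∀ i j, ‖h i j‖ ≤ C := by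
  obtain ⟨L, hLH, hLL, hdet⟩ : ∃ L : Matrix (Fin m) (Fin m) ℂ,
      Lᴴ = L ∧ L * L = P ∧ IsUnit L.det := by
    open scoped MatrixOrder in
    refine ⟨CFC.sqrt P, (CFC.sqrt_nonneg P).posSemidef.1,
      CFC.sqrt_mul_sqrt_self P hP.posSemidef.nonneg, ?_⟩
    open scoped MatrixOrder in
    have h1 : (CFC.sqrt P).det * (CFC.sqrt P).det = P.det := by
      rw [← det_mul, CFC.sqrt_mul_sqrt_self P hP.posSemidef.nonneg]
    have hPdet := hP.det_pos
    refine isUnit_iff_ne_zero.mpr fun h0 => ?_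
    rw [h0, mul_zero] at h1
    rw [← h1] at hPdet
    simp at hPdet
  have hLinv : L * L⁻¹ = 1 := mul_nonsing_inv L hdet
  have hinvL : L⁻¹ * L = 1 := nonsing_inv_mul L hdet
  refine ⟨(∑ i, ∑ k, ‖L⁻¹ i k‖) * (∑ l, ∑ j, ‖L l j‖),
    fun h hh i j => ?_⟩
  set U := L * h * L⁻¹ with hU
  clear_value U
  have hUunit : Uᴴ * U = 1 := by
    have hUH : Uᴴ = L⁻¹ * hᴴ * L := by
      rw [hU, conjTranspose_mul, conjTranspose_mul, conjTranspose_nonsing_inv, hLH]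
      simp [Matrix.mul_assoc]
    rw [hUH, hU]
    calc L⁻¹ * hᴴ * L * (L * h * L⁻¹) = L⁻¹ * (hᴴ * (L * L) * h) * L⁻¹ := by
          simp only [Matrix.mul_assoc]
      _ = L⁻¹ * P * L⁻¹ := by rw [hLL, hh]
      _ = L⁻¹ * (L * L) * L⁻¹ := by rw [hLL]
      _ = 1 := by
          rw [← Matrix.mul_assoc, hinvL, Matrix.one_mul, hLinv]
  have hUbd : ∀ k l, ‖U k l‖ ≤ 1 := by
    intro k l
    have h1 : (Uᴴ * U) l l = 1 := by rw [hUunit]; simp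
    simp only [Matrix.mul_apply, conjTranspose_apply] at h1
    have h4 : ((∑ r, (‖U r l‖ : ℂ) ^ 2) : ℂ) = 1 := by
      rw [← h1]
      refine Finset.sum_congr rfl fun r _ => ?_
      calc ((‖U r l‖ : ℂ)) ^ 2
          = (Complex.normSq (U r l) : ℂ) := by
            rw [← Complex.sq_norm]; push_cast; ring
        _ = U r l * star (U r l) := (Complex.mul_conj _).symm
        _ = star (U r l) * U r l := mul_comm _ _
    have h2 : ∑ r, ‖U r l‖ ^ 2 = 1 := by exact_mod_cast h4
    have h5 : ‖U k l‖ ^ 2 ≤ 1 := by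
      rw [← h2]
      exact Finset.single_le_sum (f := fun r => ‖U r l‖ ^ 2)
        (fun r _ => sq_nonneg _) (Finset.mem_univ k)
    nlinarith [norm_nonneg (U k l)]
  have hhe : h = L⁻¹ * U * L := by
    rw [hU]
    calc h = (L⁻¹ * L) * h * (L⁻¹ * L) := by rw [hinvL]; simp
      _ = L⁻¹ * (L * h * L⁻¹) * L := by simp only [Matrix.mul_assoc]
  rw [hhe]
  calc ‖(L⁻¹ * U * L) i j‖
      ≤ ∑ k, ‖L⁻¹ i k‖ * ‖(U * L) k j‖ := by
        rw [Matrix.mul_assoc, Matrix.mul_apply]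
        refine (norm_sum_le _ _).trans ?_
        apply le_of_eq; congr 1; ext k; exact norm_mul _ _
    _ ≤ ∑ k, ‖L⁻¹ i k‖ * (∑ l, ‖L l j‖) := by
        refine Finset.sum_le_sum fun k _ => ?_
        refine mul_le_mul_of_nonneg_left ?_ (norm_nonneg _)
        rw [Matrix.mul_apply]
        refine (norm_sum_le _ _).trans ?_
        refine Finset.sum_le_sum fun l _ => ?_
        rw [norm_mul]
        calc ‖U k l‖ * ‖L l j‖
            ≤ 1 * ‖L l j‖ :=
              mul_le_mul_of_nonneg_right (hUbd k l) (norm_nonneg _)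
          _ = ‖L l j‖ := one_mul _
    _ = (∑ k, ‖L⁻¹ i k‖) * (∑ l, ‖L l j‖) := by
        rw [← Finset.sum_mul]
    _ ≤ (∑ i', ∑ k, ‖L⁻¹ i' k‖) * (∑ l, ∑ j', ‖L l j'‖) := by
        refine mul_le_mul ?_ ?_ ?_ ?_
        · exact Finset.single_le_sum (f := fun i' => ∑ k, ‖L⁻¹ i' k‖)
            (fun i' _ => Finset.sum_nonneg fun k _ => norm_nonneg _)
            (Finset.mem_univ i)
        · refine Finset.sum_le_sum fun l _ => ?_
          exact Finset.single_le_sum (f := fun j' => ‖L l j'‖)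
            (fun j' _ => norm_nonneg _) (Finset.mem_univ j)
        · exact Finset.sum_nonneg fun l _ => norm_nonneg _
        · exact Finset.sum_nonneg fun i' _ =>
            Finset.sum_nonneg fun k _ => norm_nonneg _

/-- Let `H` be a subgroup of `GL_m(ℤ)`. If there is a positive definite Hermitian matrix
`P ∈ ℂ^{m×m}` with `h^* · P · h = P` for every `h ∈ H` (regarded as a complex matrix),
then `H` is finite. -/

theorem stmt_2 (m : ℕ) (H : Subgroup (GL (Fin m) ℤ))
    (P : Matrix (Fin m) (Fin m) ℂ) (hP : P.PosDef)
    (hinv : ∀ h : GL (Fin m) ℤ, h ∈ H →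
      ((h : Matrix (Fin m) (Fin m) ℤ).map (fun x : ℤ => (x : ℂ)))ᴴ * P *
        ((h : Matrix (Fin m) (Fin m) ℤ).map (fun x : ℤ => (x : ℂ))) = P) :
    (H : Set (GL (Fin m) ℤ)).Finite := by
  obtain ⟨C, hC⟩ := entry_bound m P hP
  set N : ℤ := ⌈C⌉ with hN
  set T : Set (Matrix (Fin m) (Fin m) ℤ) :=
    {A | ∀ i j, A i j ∈ Finset.Icc (-N) N} with hT
  have hTfin : T.Finite := by
    have : T ⊆ Set.pi Set.univ
        (fun _ : Fin m => Set.pi Set.univ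
          fun _ : Fin m => (Finset.Icc (-N) N : Set ℤ)) := by
      intro A hA
      refine Set.mem_univ_pi.mpr ?_
      intro i
      rw [Set.mem_univ_pi]
      intro j
      exact_mod_cast hA i j
    refine (Set.Finite.subset ?_ this)
    exact Set.Finite.pi fun _ => Set.Finite.pi fun _ => (Finset.Icc (-N) N).finite_toSet
  have hinj : Function.Injective
      (fun g : GL (Fin m) ℤ => (g : Matrix (Fin m) (Fin m) ℤ)) :=
    fun a b hab => Units.ext hab
  have hsub : (H : Set (GL (Fin m) ℤ)) ⊆
      (fun g : GL (Fin m) ℤ => (g : Matrix (Fin m) (Fin m) ℤ)) ⁻¹' T := by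
    intro g hg
    simp only [Set.mem_preimage, hT, Set.mem_setOf_eq]
    intro i j
    have hb := hC _ (hinv g hg) i j
    have habs : ‖((g : Matrix (Fin m) (Fin m) ℤ).map
        (fun x : ℤ => (x : ℂ))) i j‖ = |(g : Matrix (Fin m) (Fin m) ℤ) i j| := by
      simp [Matrix.map_apply]
    rw [habs] at hb
    rw [Finset.mem_Icc]
    have hi : |(g : Matrix (Fin m) (Fin m) ℤ) i j| ≤ N := by
      exact_mod_cast hb.trans (Int.le_ceil C)
    exact abs_le.mp hi
  exact Set.Finite.subset (Set.Finite.preimage hinj.injOn hTfin) hsub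
end

section
/- Let n ≥ 5 be an integer. There exist natural numbers m_0, m_1, m_2, m_3, n_0, n_1, n_2 with 1 ≤ m_j ≤ n−1 and 1 ≤ n_i ≤ n−1 for all i, j, with m_0 + m_1 + m_2 + m_3 = n and n_0 + n_1 + n_2 = n, and such that each m_j (j = 0,1,2,3), each n_i (i = 0,1,2), and each of m_0 + m_3, m_1 + m_3, m_2 + m_3 is coprime to n (equivalently, is a unit in ℤ/nℤ), if and only if gcd(n, 6) = 1. -/
/-- For an integer `n ≥ 5`, natural numbers `m₀, m₁, m₂, m₃, n₀, n₁, n₂` with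
`1 ≤ mⱼ ≤ n-1`, `1 ≤ nᵢ ≤ n-1`, `m₀ + m₁ + m₂ + m₃ = n`, `n₀ + n₁ + n₂ = n`, and such that
each `mⱼ`, each `nᵢ` and each of `m₀+m₃, m₁+m₃, m₂+m₃` is coprime to `n`, exist if and
only if `gcd(n, 6) = 1`. -/
theorem stmt_4 (n : ℕ) (hn : 5 ≤ n) :
    (∃ m0 m1 m2 m3 n0 n1 n2 : ℕ,
      (1 ≤ m0 ∧ m0 ≤ n - 1) ∧ (1 ≤ m1 ∧ m1 ≤ n - 1) ∧ (1 ≤ m2 ∧ m2 ≤ n - 1) ∧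
      (1 ≤ m3 ∧ m3 ≤ n - 1) ∧
      (1 ≤ n0 ∧ n0 ≤ n - 1) ∧ (1 ≤ n1 ∧ n1 ≤ n - 1) ∧ (1 ≤ n2 ∧ n2 ≤ n - 1) ∧
      m0 + m1 + m2 + m3 = n ∧ n0 + n1 + n2 = n ∧
      Nat.Coprime m0 n ∧ Nat.Coprime m1 n ∧ Nat.Coprime m2 n ∧ Nat.Coprime m3 n ∧
      Nat.Coprime n0 n ∧ Nat.Coprime n1 n ∧ Nat.Coprime n2 n ∧
      Nat.Coprime (m0 + m3) n ∧ Nat.Coprime (m1 + m3) n ∧ Nat.Coprime (m2 + m3) n) ↔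
    Nat.gcd n 6 = 1 := by
  constructor
  · rintro ⟨m0, m1, m2, m3, n0, n1, n2, -, -, -, -, -, -, -, hsum, hsum',
      c0, c1, c2, c3, cn0, cn1, cn2, d0, d1, d2⟩
    have h2 : ¬ 2 ∣ n := by
      intro h
      have e0 : ¬ 2 ∣ n0 := fun hd => by
        have := Nat.dvd_gcd hd h; rw [cn0] at this; omega
      have e1 : ¬ 2 ∣ n1 := fun hd => by
        have := Nat.dvd_gcd hd h; rw [cn1] at this; omega
      have e2 : ¬ 2 ∣ n2 := fun hd => by
        have := Nat.dvd_gcd hd h; rw [cn2] at this; omega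
      omega
    have h3 : ¬ 3 ∣ n := by
      intro h
      have e0 : ¬ 3 ∣ m0 := fun hd => by
        have := Nat.dvd_gcd hd h; rw [c0] at this; omega
      have e1 : ¬ 3 ∣ m1 := fun hd => by
        have := Nat.dvd_gcd hd h; rw [c1] at this; omega
      have e2 : ¬ 3 ∣ m2 := fun hd => by
        have := Nat.dvd_gcd hd h; rw [c2] at this; omega
      have e3 : ¬ 3 ∣ m3 := fun hd => by
        have := Nat.dvd_gcd hd h; rw [c3] at this; omega
      have f0 : ¬ 3 ∣ (m0 + m3) := fun hd => by
        have := Nat.dvd_gcd hd h; rw [d0] at this; omega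
      have f1 : ¬ 3 ∣ (m1 + m3) := fun hd => by
        have := Nat.dvd_gcd hd h; rw [d1] at this; omega
      have f2 : ¬ 3 ∣ (m2 + m3) := fun hd => by
        have := Nat.dvd_gcd hd h; rw [d2] at this; omega
      have r0 : m0 % 3 = 1 ∨ m0 % 3 = 2 := by omega
      have r1 : m1 % 3 = 1 ∨ m1 % 3 = 2 := by omega
      have r2 : m2 % 3 = 1 ∨ m2 % 3 = 2 := by omega
      have r3 : m3 % 3 = 1 ∨ m3 % 3 = 2 := by omega
      rcases r0 with h0 | h0 <;> rcases r1 with h1 | h1 <;> rcases r2 with h2 | h2 <;>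
        rcases r3 with h3 | h3 <;> omega
    have c2' : Nat.Coprime n 2 :=
      ((Nat.Prime.coprime_iff_not_dvd Nat.prime_two).mpr h2).symm
    have c3' : Nat.Coprime n 3 :=
      ((Nat.Prime.coprime_iff_not_dvd Nat.prime_three).mpr h3).symm
    have : Nat.Coprime n 6 := by
      have := Nat.Coprime.mul_right c2' c3'
      norm_num at this
      exact this
    exact this
  · intro h
    have h2 : ¬ 2 ∣ n := fun hd => by
      have := Nat.dvd_gcd hd (by norm_num : (2:ℕ) ∣ 6); omega
    have h3 : ¬ 3 ∣ n := fun hd => by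
      have := Nat.dvd_gcd hd (by norm_num : (3:ℕ) ∣ 6); omega
    have c2' : Nat.Coprime 2 n := (Nat.Prime.coprime_iff_not_dvd Nat.prime_two).mpr h2
    have c3' : Nat.Coprime 3 n := (Nat.Prime.coprime_iff_not_dvd Nat.prime_three).mpr h3
    refine ⟨1, 1, n - 3, 1, 1, 1, n - 2, ⟨le_refl 1, by omega⟩, ⟨le_refl 1, by omega⟩,
      ⟨by omega, by omega⟩, ⟨le_refl 1, by omega⟩, ⟨le_refl 1, by omega⟩,
      ⟨le_refl 1, by omega⟩, ⟨by omega, by omega⟩, by omega, by omega,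
      Nat.coprime_one_left n, Nat.coprime_one_left n,
      (Nat.coprime_self_sub_left (by omega)).mpr c3',
      Nat.coprime_one_left n, Nat.coprime_one_left n, Nat.coprime_one_left n,
      (Nat.coprime_self_sub_left (by omega)).mpr c2',
      by show Nat.Coprime 2 n; exact c2', by show Nat.Coprime 2 n; exact c2', ?_⟩
    have : n - 3 + 1 = n - 2 := by omega
    rw [this]
    exact (Nat.coprime_self_sub_left (by omega)).mpr c2'
end

section
/- Let n ≥ 5 be an integer with gcd(n, 6) = 1, and let m_0, m_1, m_2, m_3 be natural numbers with 1 ≤ m_j ≤ n−1 for each j, m_0 + m_1 + m_2 + m_3 = n, each m_j coprime to n, and m_0 + m_3 coprime to n. Then there exists an integer j with 1 ≤ j ≤ n−1 and gcd(j, n) = 1 such that [j·m_0]_n + [j·m_1]_n + [j·m_2]_n + [j·m_3]_n = 2n. -/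
/-- Let `n ≥ 5` with `gcd(n,6) = 1` and `m₀, m₁, m₂, m₃` natural numbers with
`1 ≤ mⱼ ≤ n-1`, `m₀ + m₁ + m₂ + m₃ = n`, each `mⱼ` coprime to `n`, and `m₀ + m₃` coprime
to `n`. Then there is `1 ≤ j ≤ n-1` coprime to `n` with
`[j·m₀]ₙ + [j·m₁]ₙ + [j·m₂]ₙ + [j·m₃]ₙ = 2n`. -/
theorem stmt_5 (n m0 m1 m2 m3 : ℕ) (hn : 5 ≤ n) (h6 : Nat.gcd n 6 = 1)
    (hm0 : 1 ≤ m0 ∧ m0 ≤ n - 1) (hm1 : 1 ≤ m1 ∧ m1 ≤ n - 1)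
    (hm2 : 1 ≤ m2 ∧ m2 ≤ n - 1) (hm3 : 1 ≤ m3 ∧ m3 ≤ n - 1)
    (hsum : m0 + m1 + m2 + m3 = n)
    (hc0 : Nat.Coprime m0 n) (hc1 : Nat.Coprime m1 n)
    (hc2 : Nat.Coprime m2 n) (hc3 : Nat.Coprime m3 n)
    (hc03 : Nat.Coprime (m0 + m3) n) :
    ∃ j : ℕ, 1 ≤ j ∧ j ≤ n - 1 ∧ Nat.Coprime j n ∧
      (j * m0) % n + (j * m1) % n + (j * m2) % n + (j * m3) % n = 2 * n := by
  haveI : NeZero n := ⟨by omega⟩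
  haveI : Fact (1 < n) := ⟨by omega⟩
  set A : ZMod n := ((m0 + m3 : ℕ) : ZMod n) with hA
  have hAu : IsUnit A := (ZMod.isUnit_iff_coprime _ n).mpr hc03
  set u : ZMod n := -A⁻¹ with hu
  have huA : u * (-A) = 1 := by
    rw [hu]; ring_nf; exact ZMod.inv_mul_of_unit A hAu
  have huu : IsUnit u := IsUnit.of_mul_eq_one (a := u) (-A) huA
  set j : ℕ := u.val with hj
  have hjcast : (j : ZMod n) = u := by
    rw [hj, ZMod.natCast_val, ZMod.cast_id]
  have hjcop : Nat.Coprime j n := by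
    rw [← ZMod.isUnit_iff_coprime, hjcast]; exact huu
  have hjlt : j < n := ZMod.val_lt u
  have hjpos : 1 ≤ j := by
    rcases Nat.eq_zero_or_pos j with h | h
    · exfalso
      have : u = 0 := by rw [← hjcast, h]; simp
      exact huu.ne_zero this
    · exact h
  refine ⟨j, hjpos, by omega, hjcop, ?_⟩
  -- each residue is ≥ 1 and < n
  have hv : ∀ m : ℕ, Nat.Coprime m n → 1 ≤ (j * m) % n ∧ (j * m) % n < n := by
    intro m hc
    refine ⟨?_, Nat.mod_lt _ (by omega)⟩
    rcases Nat.eq_zero_or_pos ((j * m) % n) with h | h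
    · exfalso
      have hdvd : n ∣ j * m := Nat.dvd_of_mod_eq_zero h
      have : ((j * m : ℕ) : ZMod n) = 0 := (ZMod.natCast_eq_zero_iff _ _).mpr hdvd
      rw [Nat.cast_mul, hjcast] at this
      have hmu : IsUnit ((m : ℕ) : ZMod n) := (ZMod.isUnit_iff_coprime _ n).mpr hc
      exact (huu.mul hmu).ne_zero this
    · exact h
  obtain ⟨h0l, h0u⟩ := hv m0 hc0
  obtain ⟨h1l, h1u⟩ := hv m1 hc1
  obtain ⟨h2l, h2u⟩ := hv m2 hc2
  obtain ⟨h3l, h3u⟩ := hv m3 hc3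
  -- sum m1+m2 ≡ -(m0+m3)
  have hsum' : ((m1 + m2 : ℕ) : ZMod n) = -A := by
    have : ((m0 + m1 + m2 + m3 : ℕ) : ZMod n) = ((n : ℕ) : ZMod n) := by rw [hsum]
    rw [ZMod.natCast_self] at this
    rw [hA]
    push_cast at this ⊢
    linear_combination this
  -- pair (1,2): sum of residues ≡ 1 mod n
  have e12 : ((j * m1) % n + (j * m2) % n) % n = 1 := by
    have : (((j * m1) % n + (j * m2) % n : ℕ) : ZMod n) = ((1 : ℕ) : ZMod n) := by
      push_cast [ZMod.natCast_mod]
      rw [hjcast]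
      calc u * m1 + u * m2 = u * ((m1 + m2 : ℕ) : ZMod n) := by push_cast; ring
        _ = 1 := by rw [hsum']; exact huA
    have := (ZMod.natCast_eq_natCast_iff _ _ _).mp this
    unfold Nat.ModEq at this
    rw [this, Nat.mod_eq_of_lt (by omega)]
  -- pair (0,3): sum of residues ≡ n-1 mod n
  have e03 : ((j * m0) % n + (j * m3) % n) % n = n - 1 := by
    have : (((j * m0) % n + (j * m3) % n : ℕ) : ZMod n) = ((n - 1 : ℕ) : ZMod n) := by
      push_cast [ZMod.natCast_mod]
      rw [hjcast]
      have hn1 : ((n - 1 : ℕ) : ZMod n) = -1 := by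
        have : ((n - 1 : ℕ) + 1 : ℕ) = n := by omega
        have h2 : (((n - 1 : ℕ) + 1 : ℕ) : ZMod n) = 0 := by rw [this]; exact ZMod.natCast_self n
        push_cast at h2
        linear_combination h2
      push_cast at hn1
      rw [hn1]
      calc u * m0 + u * m3 = u * A := by rw [hA]; push_cast; ring
        _ = -1 := by have := huA; linear_combination -this
    have := (ZMod.natCast_eq_natCast_iff _ _ _).mp this
    unfold Nat.ModEq at this
    rw [this, Nat.mod_eq_of_lt (by omega)]
  -- extract exact values
  have h12 : (j * m1) % n + (j * m2) % n = n + 1 := by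
    rcases lt_or_ge ((j * m1) % n + (j * m2) % n) n with h | h
    · rw [Nat.mod_eq_of_lt h] at e12; omega
    · rw [Nat.mod_eq_sub_mod h, Nat.mod_eq_of_lt (by omega)] at e12; omega
  have h03 : (j * m0) % n + (j * m3) % n = n - 1 := by
    rcases lt_or_ge ((j * m0) % n + (j * m3) % n) n with h | h
    · rw [Nat.mod_eq_of_lt h] at e03; omega
    · rw [Nat.mod_eq_sub_mod h, Nat.mod_eq_of_lt (by omega)] at e03; omega
  omega
end
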